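/- Let G = ⟨S′|R′⟩ be the group given by the Section-5 modification. Then for every geodesic ray γ in G whose intersection function ρ_γ (with respect to R′) is sublinear, there exists an integer j ≥ 0 such that ρ_γ(t) ≤ log_N(t) + 2 + 2j for all t ≥ 1. (Hence the functions ρ_j(t) = log_N(t) + 2 + 2j form a sublinear exhaustion for (S′, R′), and by the results cited in the paper the Morse boundary of G is σ-compact, while by the previous statement not every Morse geodesic ray in Cay(G, S′) is strongly contracting; this proves the paper's Proposition 5.2 and Theorem A(3).) -/

import Mathlib

namespace SmallCancel

/-- A word over `S`: a finite sequence of letters from the symmetrized alphabet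
`S ∪ S⁻¹`, encoded as pairs `(s, b)` where `b = true` denotes the letter `s`
and `b = false` denotes its formal inverse `s⁻¹`. -/
abbrev Word (S : Type) := List (S × Bool)

/-- The formal inverse of a word. -/
def wInv {S : Type} (w : Word S) : Word S := (w.map fun a => (a.1, !a.2)).reverse

/-- A word is reduced if no letter is immediately followed by its inverse. -/
def Reduced {S : Type} (w : Word S) : Prop := w.Chain' fun a b => b ≠ (a.1, !a.2)

/-- A word is cyclically reduced if all of its cyclic shifts are reduced. -/
def CyclicallyReduced {S : Type} (w : Word S) : Prop := ∀ n, Reduced (w.rotate n)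

/-- `R̄`: the set of all cyclic shifts of elements of `R` and of their inverses. -/
def cyclicClosure {S : Type} (R : Set (Word S)) : Set (Word S) :=
  {w | ∃ r ∈ R, ∃ n, w = r.rotate n ∨ w = (wInv r).rotate n}

/-- `p` is a piece with respect to `R` if it is a prefix of two distinct elements
of `R̄`. -/
def IsPiece {S : Type} (R : Set (Word S)) (p : Word S) : Prop :=
  ∃ r₁ ∈ cyclicClosure R, ∃ r₂ ∈ cyclicClosure R, r₁ ≠ r₂ ∧ p <+: r₁ ∧ p <+: r₂

/-- The `C'(λ)` small-cancellation condition: every piece `p` that is a subword of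
some `r ∈ R̄` satisfies `|p| < λ|r|`. -/
def SmallCancellation {S : Type} (R : Set (Word S)) (lam : ℝ) : Prop :=
  ∀ p, IsPiece R p → ∀ r ∈ cyclicClosure R, p <:+: r →
    (p.length : ℝ) < lam * r.length

/-- The element of the presented group `⟨S | R⟩` represented by a word `w`. -/
def toPresented {S : Type} (R : Set (Word S)) (w : Word S) :
    PresentedGroup {g : FreeGroup S | ∃ r ∈ R, g = FreeGroup.mk r} :=
  QuotientGroup.mk (FreeGroup.mk w)

/-- A word `w` is geodesic if every word representing the same element of the
presented group `⟨S | R⟩` is at least as long as `w`. -/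
def IsGeodesicWord {S : Type} (R : Set (Word S)) (w : Word S) : Prop :=
  ∀ v : Word S, toPresented R v = toPresented R w → w.length ≤ v.length

/-- The finite prefix of length `n` of an infinite word `γ`. -/
def rayPrefix {S : Type} (γ : ℕ → S × Bool) (n : ℕ) : Word S := (List.range n).map γ

/-- A geodesic ray: an infinite word all of whose finite prefixes are geodesic. -/
def IsGeodesicRay {S : Type} (R : Set (Word S)) (γ : ℕ → S × Bool) : Prop :=
  ∀ n, IsGeodesicWord R (rayPrefix γ n)

/-- The intersection function of a ray `γ`:
`ρ_γ(t) = max{|w| : w is a subword of some r ∈ R̄ with |r| ≤ t and a subword of γ}`. -/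
noncomputable def intersectionFn {S : Type} (R : Set (Word S)) (γ : ℕ → S × Bool)
    (t : ℕ) : ℕ :=
  sSup {n | ∃ w : Word S, (∃ r ∈ cyclicClosure R, r.length ≤ t ∧ w <:+: r) ∧
    (∃ m, w <:+: rayPrefix γ m) ∧ w.length = n}

/-- A function is sublinear if `ρ(n)/n → 0`. -/
def Sublinear (ρ : ℕ → ℝ) : Prop :=
  Filter.Tendsto (fun n => ρ n / n) Filter.atTop (nhds 0)

/-- A weakly increasing function `f : ℕ → ℝ` is viable if `f(n) ≥ 6` for all `n`
and `f(n) → ∞`. -/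
def Viable (f : ℕ → ℝ) : Prop :=
  Monotone f ∧ (∀ n, 6 ≤ f n) ∧ Filter.Tendsto f Filter.atTop Filter.atTop

/-- The `C'(1/f)` small-cancellation condition for a set of relators: every piece `p`
that is a subword of some `r ∈ R̄` satisfies `|p| < |r|/f(|r|)`. -/
def CPrimeOverF {S : Type} (R : Set (Word S)) (f : ℕ → ℝ) : Prop :=
  ∀ p, IsPiece R p → ∀ r ∈ cyclicClosure R, p <:+: r →
    (p.length : ℝ) < (r.length : ℝ) / f r.length

/-- The pair `(x, R)` satisfies the `C'(1/f)` condition: every word `p` that is a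
subword both of `x` and of some `r ∈ R̄` satisfies `|p| < |r|/f(|r|)`. -/
def PairCPrimeOverF {S : Type} (x : Word S) (R : Set (Word S)) (f : ℕ → ℝ) : Prop :=
  ∀ p, p <:+: x → ∀ r ∈ cyclicClosure R, p <:+: r →
    (p.length : ℝ) < (r.length : ℝ) / f r.length

/-- The increasing partial small-cancellation condition (IPSC). -/
def IPSC {S : Type} (R : Set (Word S)) : Prop :=
  ∀ n : ℕ → ℕ, (∀ i, 0 < n i) → ∃ f : ℕ → ℝ, Viable f ∧
    ∀ K : ℕ, ∃ i, K ≤ i ∧ ∃ x y : Word S, x ++ y ∈ cyclicClosure R ∧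
      n i ≤ (x ++ y).length ∧ ((x ++ y).length : ℝ) / i ≤ x.length ∧
      PairCPrimeOverF x R f

end SmallCancel

namespace SmallCancel

/-- A word `w` of length `n` (with letters in `S`) is non-periodic if the `2n` words
obtained as cyclic shifts of `w` and of `w⁻¹` are pairwise distinct. -/
def NonPeriodic {S : Type} (w : Word S) : Prop :=
  Function.Injective fun p : Fin w.length × Bool =>
    if p.2 then w.rotate p.1 else (wInv w).rotate p.1

/-- The data of the Section-4 construction: an integer `N ≥ 28`, a positive multiple
`L` of `N`, and three distinct non-periodic positive words `r_1¹, r_2¹, r_3¹` of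
length `L` over `S` (indexed by `ZMod 3`, with the paper's index `i ∈ {1,2,3}` taken
modulo 3) satisfying the `C'(1/(4N))` small-cancellation condition, each given as the
concatenation of `N` blocks `y_(i,l)¹` of length `L/N`. -/
structure Section4Data (S : Type) where
  /-- the parameter `N ≥ 28` -/
  N : ℕ
  hN : 28 ≤ N
  /-- the length `L`, a positive multiple of `N` -/
  L : ℕ
  hdvd : N ∣ L
  hLpos : 0 < L
  /-- the blocks `y_(i,l)¹`, so that `r_i¹ = y_(i,1)¹ ⋯ y_(i,N)¹` -/
  y1 : ZMod 3 → Fin N → Word S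
  hlen : ∀ i l, (y1 i l).length = L / N
  /-- the level-1 relators use only letters of `S` (no inverse letters) -/
  hletters : ∀ i l, ∀ a ∈ y1 i l, a.2 = true
  /-- the three level-1 relators are pairwise distinct -/
  hdistinct : Function.Injective fun i : ZMod 3 => (List.ofFn fun l => y1 i l).flatten
  /-- the three level-1 relators are non-periodic -/
  hnonper : ∀ i : ZMod 3, NonPeriodic ((List.ofFn fun l => y1 i l).flatten)
  /-- the level-1 relators satisfy the `C'(1/(4N))` condition -/
  hsc : SmallCancellation
    {w | ∃ i : ZMod 3, w = (List.ofFn fun l => y1 i l).flatten} (1 / (4 * N))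

namespace Section4Data

variable {S : Type}

/-- The words `y_(i,l)^k` of the Section-4 construction, defined for levels `k ≥ 1`
by `y_(i,l)^{k+1} = ∏_{j=1}^{N} (y_(i,j)^k · y_(i+1,l)^k)` (the value at `k = 0` is
irrelevant and set to `y1`). -/
def y (D : Section4Data S) : ℕ → ZMod 3 → Fin D.N → Word S
  | 0 => D.y1
  | 1 => D.y1
  | (k + 2) => fun i l =>
      (List.ofFn fun j : Fin D.N => D.y (k + 1) i j ++ D.y (k + 1) (i + 1) l).flatten

/-- The relators `r_i^k = ∏_{j=1}^{N} y_(i,j)^k` (for `k = 1` this agrees with the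
given level-1 relators). -/
def r (D : Section4Data S) (k : ℕ) (i : ZMod 3) : Word S :=
  (List.ofFn fun j : Fin D.N => D.y k i j).flatten

/-- The set of relators `R = {r_i^k : 1 ≤ i ≤ 3, k ≥ 1}` of the Section-4
construction. -/
def R (D : Section4Data S) : Set (Word S) :=
  {w | ∃ k, 1 ≤ k ∧ ∃ i : ZMod 3, w = D.r k i}

end Section4Data

end SmallCancel

namespace SmallCancel

/-- Lift a word over `S` to a word over `S′ = S ∪ {a}`, encoded as `Option S` with
the new letter `a = none`. -/
def liftWord {S : Type} (w : Word S) : Word (Option S) :=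
  w.map fun a => (some a.1, a.2)

/-- The word `a^k` in the new letter `a = none`. -/
def aPow (S : Type) (k : ℕ) : Word (Option S) :=
  List.replicate k ((none : Option S), true)

namespace Section4Data

open Classical in
/-- The Section-5 modification of the relators: `r̃_i^k = r_i^k` for `i ∈ {1, 2}`,
while `r̃_3^k = r_3^k · a^k` if `k ≤ |r_3^k|/42` and `r̃_3^k = r_3^k` otherwise.
(The paper's index `3` is `(3 : ZMod 3)`.) -/
noncomputable def rt {S : Type} (D : Section4Data S) (k : ℕ) (i : ZMod 3) :
    Word (Option S) :=
  if i = (3 : ZMod 3) ∧ (k : ℝ) ≤ (D.r k i).length / 42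
  then liftWord (D.r k i) ++ aPow S k
  else liftWord (D.r k i)

/-- The Section-5 set of relators `R′ = {r̃_i^k : 1 ≤ i ≤ 3, k ≥ 1}`. -/
def R' {S : Type} (D : Section4Data S) : Set (Word (Option S)) :=
  {w | ∃ k, 1 ≤ k ∧ ∃ i : ZMod 3, w = D.rt k i}

end Section4Data

end SmallCancel


namespace SmallCancel

theorem wInv_length {S : Type} (w : Word S) : (wInv w).length = w.length := by
  simp [wInv]

theorem wInv_append {S : Type} (x y : Word S) : wInv (x ++ y) = wInv y ++ wInv x := by
  simp [wInv]

theorem IsInfix.wInv_mono {S : Type} {x y : Word S} (h : x <:+: y) : wInv x <:+: wInv y := by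
  obtain ⟨u, v, rfl⟩ := h
  exact ⟨wInv v, wInv u, by rw [wInv_append, wInv_append, List.append_assoc]⟩

theorem wInv_flatten {S : Type} (xs : List (Word S)) :
    wInv xs.flatten = ((xs.map wInv).reverse).flatten := by
  induction xs with
  | nil => simp [wInv]
  | cons x xs ih => simp [wInv_append, ih]

theorem liftWord_length {S : Type} (w : Word S) : (liftWord w).length = w.length := by
  simp [liftWord]

theorem liftWord_flatten {S : Type} (xs : List (Word S)) :
    liftWord xs.flatten = (xs.map liftWord).flatten := by
  simp only [liftWord, List.map_flatten]
  rfl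

theorem IsInfix.liftWord_mono {S : Type} {x y : Word S} (h : x <:+: y) :
    liftWord x <:+: liftWord y := by
  obtain ⟨u, v, rfl⟩ := h
  exact ⟨liftWord u, liftWord v, by simp [liftWord]⟩

theorem aPow_length (S : Type) (k : ℕ) : (aPow S k).length = k := by simp [aPow]

theorem rotate_infix_sq {α : Type*} (l : List α) (n : ℕ) : l.rotate n <:+: l ++ l := by
  rw [List.rotate_eq_drop_append_take_mod]
  refine ⟨l.take (n % l.length), l.drop (n % l.length), ?_⟩
  conv_rhs => rw [← List.take_append_drop (n % l.length) l]
  simp only [List.append_assoc]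

theorem flatten_decomp {S : Type} (P : Word S → Prop) (xs : List (Word S))
    (h : ∀ x ∈ xs, ∃ bs : List (Word S), (∀ b ∈ bs, P b) ∧ x = bs.flatten) :
    ∃ bs : List (Word S), (∀ b ∈ bs, P b) ∧ xs.flatten = bs.flatten := by
  induction xs with
  | nil => exact ⟨([] : List (Word S)), by simp, by simp⟩
  | cons x xs ih =>
    obtain ⟨bs1, hb1, he1⟩ := h x (by simp)
    obtain ⟨bs2, hb2, he2⟩ := ih (fun x hx => h x (List.mem_cons_of_mem _ hx))
    refine ⟨(bs1 ++ bs2 : List (Word S)), ?_, by simp [he1, he2]⟩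
    intro b hb
    rcases List.mem_append.1 hb with h' | h'
    exacts [hb1 b h', hb2 b h']



theorem infix_append_split {α : Type*} {w P T : List α} (h : w <:+: P ++ T) :
    ∃ w1 w2, w = w1 ++ w2 ∧ w1 <:+: P ∧ w2 <:+: T := by
  obtain ⟨u, v, huv⟩ := h
  obtain ⟨n, hn⟩ : ∃ n, n = P.length := ⟨_, rfl⟩
  refine ⟨w.take (n - u.length), w.drop (n - u.length),
    (List.take_append_drop _ _).symm, ?_, ?_⟩
  · have hP : P = (u ++ (w ++ v)).take n := by
      rw [List.append_assoc] at huv; rw [huv, hn]; simp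
    rw [List.take_append, List.take_append] at hP
    exact ⟨u.take n, v.take (n - u.length - w.length),
      by rw [hP]; simp [List.append_assoc]⟩
  · have hT : T = (u ++ (w ++ v)).drop n := by
      rw [List.append_assoc] at huv; rw [huv, hn]; simp
    rw [List.drop_append, List.drop_append] at hT
    exact ⟨u.drop n, v.drop (n - u.length - w.length),
      by rw [hT]; simp [List.append_assoc]⟩



theorem exists_block_infix {α : Type*} {B : ℕ} (hB : 0 < B) :
    ∀ (xs : List (List α)) (q : List α), (∀ b ∈ xs, b.length = B) →
    q <:+: xs.flatten → 2 * B ≤ q.length → ∃ b ∈ xs, b <:+: q := by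
  intro xs
  induction xs with
  | nil =>
    intro q _ hq hlq
    have h0 := hq.length_le
    simp only [List.flatten_nil, List.length_nil] at h0
    omega
  | cons x xs ih =>
    intro q hlen hq hlq
    have hx : x.length = B := hlen x List.mem_cons_self
    obtain ⟨u, v, huv⟩ := hq
    rw [List.flatten_cons] at huv
    by_cases hu : x.length ≤ u.length
    · have hdrop : xs.flatten = u.drop x.length ++ (q ++ v) := by
        have h := congrArg (List.drop x.length) huv
        rw [List.append_assoc, List.drop_append_of_le_length hu, List.drop_left] at h
        exact h.symm
      obtain ⟨b, hb, h2⟩ := ih q (fun b hb => hlen b (List.mem_cons_of_mem _ hb))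
        ⟨u.drop x.length, v, by rw [hdrop, List.append_assoc]⟩ hlq
      exact ⟨b, List.mem_cons_of_mem _ hb, h2⟩
    · push_neg at hu
      match xs, hlen with
      | [], hlen =>
        have h := congrArg List.length huv
        simp at h
        omega
      | b :: rest, hlen =>
        have hbB : b.length = B := hlen b (by simp)
        have key : b ++ rest.flatten = q.drop (B - u.length) ++ v := by
          have h := congrArg (List.drop x.length) huv
          rw [List.append_assoc, List.drop_left, List.drop_append,
            List.drop_eq_nil_of_le (le_of_lt hu),
            List.drop_append_of_le_length (by omega : x.length - u.length ≤ q.length),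
            hx] at h
          simpa [List.flatten_cons] using h.symm
        have hble : B ≤ (q.drop (B - u.length)).length := by
          rw [List.length_drop]; omega
        have hbq : b = (q.drop (B - u.length)).take B := by
          have h := congrArg (List.take B) key
          rw [List.take_append_of_le_length hble, ← hbB, List.take_left, hbB] at h
          exact h
        refine ⟨b, by simp, hbq ▸ ((List.take_prefix _ _).isInfix.trans
          (List.drop_suffix _ _).isInfix)⟩

theorem rotate_append_split {α : Type*} (X Y : List α) (n : ℕ) {w : List α}
    (h : w <:+: (X ++ Y).rotate n) :
    ∃ w1 w2 w3 w4 : List α, w = w1 ++ (w2 ++ (w3 ++ w4)) ∧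
      w1 <:+: X ∧ w3 <:+: X ∧ w2.length + w4.length ≤ Y.length := by
  rw [List.rotate_eq_drop_append_take_mod, List.drop_append,
    List.take_append] at h
  obtain ⟨w12, w34, rfl, h12, h34⟩ := infix_append_split h
  obtain ⟨w1, w2, rfl, h1, h2⟩ := infix_append_split h12
  obtain ⟨w3, w4, rfl, h3, h4⟩ := infix_append_split h34
  refine ⟨w1, w2, w3, w4, by simp [List.append_assoc],
    h1.trans (List.drop_suffix _ _).isInfix, h3.trans (List.take_prefix _ _).isInfix, ?_⟩
  have l2 := h2.length_le
  have l4 := h4.length_le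
  rw [List.length_drop] at l2
  rw [List.length_take] at l4
  omega

theorem append_rotate_swap {α : Type*} (X Y : List α) (n : ℕ) :
    (Y ++ X).rotate n = (X ++ Y).rotate (X.length + n) := by
  rw [← List.rotate_rotate]
  congr 1
  rw [List.rotate_eq_drop_append_take (by rw [List.length_append]; omega),
    List.drop_left, List.take_left]

namespace Section4Data

variable {S : Type} (D : Section4Data S)

/-- block length at level `m` -/
def blk (m : ℕ) : ℕ := (2 * D.N) ^ (m - 1) * (D.L / D.N)

/-- relator length at level `m` -/
def lenr (m : ℕ) : ℕ := D.N * D.blk m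

theorem Npos : 0 < D.N := by have := D.hN; omega

theorem Qpos : 0 < D.L / D.N := Nat.div_pos (Nat.le_of_dvd D.hLpos D.hdvd) D.Npos

theorem blk_pos (m : ℕ) : 0 < D.blk m :=
  Nat.mul_pos (Nat.pow_pos (by have := D.Npos; omega)) D.Qpos

theorem lenr_pos (m : ℕ) : 0 < D.lenr m := Nat.mul_pos D.Npos (D.blk_pos m)

theorem y_def_succ (k : ℕ) (hk : 1 ≤ k) (i : ZMod 3) (l : Fin D.N) :
    D.y (k + 1) i l
      = (List.ofFn fun j : Fin D.N => D.y k i j ++ D.y k (i + 1) l).flatten := by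
  obtain ⟨m, rfl⟩ : ∃ m, k = m + 1 := ⟨k - 1, by omega⟩
  rfl

theorem y_length : ∀ k, 1 ≤ k → ∀ (i : ZMod 3) (l : Fin D.N),
    (D.y k i l).length = D.blk k := by
  intro k hk
  induction k with
  | zero => omega
  | succ k ih =>
    rcases Nat.eq_or_lt_of_le hk with h1 | h1
    · intro i l
      have : k = 0 := by omega
      subst this
      simp [y, blk, D.hlen]
    · have hk1 : 1 ≤ k := by omega
      intro i l
      rw [D.y_def_succ k hk1, List.length_flatten, List.map_ofFn, List.sum_ofFn]
      have : ∀ j : Fin D.N, (List.length ∘ fun j : Fin D.N =>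
          D.y k i j ++ D.y k (i + 1) l) j = 2 * D.blk k := by
        intro j
        simp [ih hk1 i j, ih hk1 (i + 1) l]
        ring
      rw [Finset.sum_congr rfl fun j _ => this j, Finset.sum_const]
      simp only [blk, Nat.add_sub_cancel, smul_eq_mul, Finset.card_univ, Fintype.card_fin]
      rw [show (2 * D.N) ^ k = (2 * D.N) ^ (k - 1 + 1) by rw [Nat.sub_add_cancel hk1],
        pow_succ]
      ring

theorem r_length (k : ℕ) (hk : 1 ≤ k) (i : ZMod 3) :
    (D.r k i).length = D.lenr k := by
  rw [r, List.length_flatten, List.map_ofFn, List.sum_ofFn]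
  have : ∀ j : Fin D.N, (List.length ∘ fun j : Fin D.N => D.y k i j) j = D.blk k :=
    fun j => D.y_length k hk i j
  rw [Finset.sum_congr rfl fun j _ => this j, Finset.sum_const]
  simp only [lenr, smul_eq_mul, Finset.card_univ, Fintype.card_fin]

theorem y_blocks (m : ℕ) (hm : 1 ≤ m) : ∀ k, m ≤ k → ∀ (i : ZMod 3) (l : Fin D.N),
    ∃ bs : List (Word S), (∀ b ∈ bs, ∃ (α : ZMod 3) (β : Fin D.N), b = D.y m α β) ∧
      D.y k i l = bs.flatten := by
  intro k hk
  induction k, hk using Nat.le_induction with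
  | base =>
    refine fun i l => ⟨[D.y m i l], ?_, by simp⟩
    intro b hb
    rw [List.mem_singleton] at hb
    exact ⟨i, l, hb⟩
  | succ k hk ih =>
    intro i l
    rw [D.y_def_succ k (hm.trans hk)]
    apply flatten_decomp
    intro x hx
    obtain ⟨j, rfl⟩ := List.mem_ofFn.1 hx
    obtain ⟨bs1, hb1, he1⟩ := ih i j
    obtain ⟨bs2, hb2, he2⟩ := ih (i + 1) l
    refine ⟨bs1 ++ bs2, ?_,
      show D.y k i j ++ D.y k (i + 1) l = _ by rw [he1, he2, List.flatten_append]⟩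
    intro b hb
    rcases List.mem_append.1 hb with h' | h'
    exacts [hb1 b h', hb2 b h']

theorem r_blocks (m : ℕ) (hm : 1 ≤ m) (k : ℕ) (hmk : m ≤ k) (i : ZMod 3) :
    ∃ bs : List (Word S), (∀ b ∈ bs, ∃ (α : ZMod 3) (β : Fin D.N), b = D.y m α β) ∧
      D.r k i = bs.flatten := by
  rw [r]
  apply flatten_decomp
  intro x hx
  obtain ⟨j, rfl⟩ := List.mem_ofFn.1 hx
  exact D.y_blocks m hm k hmk i j

theorem y_infix_r (m : ℕ) (α : ZMod 3) (β : Fin D.N) : D.y m α β <:+: D.r m α :=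
  List.infix_of_mem_flatten (List.mem_ofFn.2 ⟨β, rfl⟩)

theorem liftWord_r_prefix (k : ℕ) (i : ZMod 3) : liftWord (D.r k i) <+: D.rt k i := by
  rw [rt]
  split
  · exact ⟨aPow S k, rfl⟩
  · exact List.prefix_refl _

theorem rt_length_le (k : ℕ) (hk : 1 ≤ k) (i : ZMod 3) :
    (D.rt k i).length ≤ D.lenr k + k := by
  rw [rt]
  split <;> simp [liftWord_length, aPow_length, D.r_length k hk i]

theorem rt_length_ge (k : ℕ) (hk : 1 ≤ k) (i : ZMod 3) :
    D.lenr k ≤ (D.rt k i).length := by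
  rw [rt]
  split <;> simp [liftWord_length, aPow_length, D.r_length k hk i]

theorem rt_mem_cc (k : ℕ) (hk : 1 ≤ k) (i : ZMod 3) :
    D.rt k i ∈ cyclicClosure D.R' :=
  ⟨D.rt k i, ⟨k, hk, i, rfl⟩, 0, Or.inl (by simp)⟩

theorem wInv_rt_mem_cc (k : ℕ) (hk : 1 ≤ k) (i : ZMod 3) :
    wInv (D.rt k i) ∈ cyclicClosure D.R' :=
  ⟨D.rt k i, ⟨k, hk, i, rfl⟩, 0, Or.inr (by simp)⟩

theorem pow_le_lenr (k : ℕ) (hk : 1 ≤ k) : D.N ^ k ≤ D.lenr k := by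
  have h1 : D.N ^ (k - 1) ≤ (2 * D.N) ^ (k - 1) :=
    Nat.pow_le_pow_left (by omega) _
  calc D.N ^ k = D.N * D.N ^ (k - 1) := by
        rw [← pow_succ']
        congr 1
        omega
    _ ≤ D.N * ((2 * D.N) ^ (k - 1) * (D.L / D.N)) := by
        have := D.Qpos
        calc D.N * D.N ^ (k-1) ≤ D.N * (2*D.N) ^ (k-1) := Nat.mul_le_mul_left _ h1
          _ ≤ D.N * ((2 * D.N) ^ (k - 1) * (D.L / D.N)) := by
              rw [← mul_assoc]
              exact Nat.le_mul_of_pos_right _ this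
    _ = D.lenr k := rfl

theorem two_lenr_le (k m : ℕ) (hk1 : 1 ≤ k) (hk : k < m) : 2 * D.lenr k ≤ D.lenr m := by
  have h : 2 * (2 * D.N) ^ (k - 1) ≤ (2 * D.N) ^ (m - 1) := by
    calc 2 * (2 * D.N) ^ (k - 1) ≤ (2 * D.N) * (2 * D.N) ^ (k - 1) := by
          have := D.Npos
          exact Nat.mul_le_mul (by omega) le_rfl
      _ = (2 * D.N) ^ k := by rw [← pow_succ']; congr 1; omega
      _ ≤ (2 * D.N) ^ (m - 1) := by
          have hN := D.Npos
          exact Nat.pow_le_pow_right (by omega) (by omega)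
  calc 2 * D.lenr k = D.N * (2 * (2 * D.N) ^ (k - 1) * (D.L / D.N)) := by
        simp [lenr, blk]; ring
    _ ≤ D.N * ((2 * D.N) ^ (m - 1) * (D.L / D.N)) := by
        apply Nat.mul_le_mul_left
        exact Nat.mul_le_mul_right _ h
    _ = D.lenr m := rfl

theorem self_le_lenr (m : ℕ) : m ≤ D.lenr m := by
  rcases Nat.eq_zero_or_pos m with rfl | hm
  · exact Nat.zero_le _
  · have h1 : m < 2 ^ m := Nat.lt_two_pow_self
    have h2 : (2 : ℕ) ^ m = 2 * 2 ^ (m - 1) := by rw [← pow_succ']; congr 1; omega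
    have h3 : (2 : ℕ) ^ (m - 1) ≤ (2 * D.N) ^ (m - 1) :=
      Nat.pow_le_pow_left (by have := D.Npos; omega) _
    have h4 := D.Qpos
    calc m ≤ 2 * 2 ^ (m - 1) := by omega
      _ ≤ D.N * (2 * D.N) ^ (m - 1) := Nat.mul_le_mul (by have := D.hN; omega) h3
      _ ≤ D.N * ((2 * D.N) ^ (m - 1) * (D.L / D.N)) := by
          rw [← mul_assoc]
          exact Nat.le_mul_of_pos_right _ h4
      _ = D.lenr m := rfl

end Section4Data

end SmallCancel

open SmallCancel Section4Data

/-- second part of Proposition 5.2 of the paper. Let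
`G = ⟨S′|R′⟩` be the group of the Section-5 modification. For every geodesic ray `γ`
in `G` whose intersection function `ρ_γ` (with respect to `R′`) is sublinear, there
exists `j ≥ 0` such that `ρ_γ(t) ≤ log_N(t) + 2 + 2j` for all `t ≥ 1`. (Hence the
functions `ρ_j(t) = log_N(t) + 2 + 2j` form a sublinear exhaustion for `(S′, R′)`,
so the Morse boundary of `G` is σ-compact, while not every Morse geodesic ray in
`Cay(G, S′)` is strongly contracting: Theorem A(3).) -/
theorem section5_sublinear_exhaustion {S : Type} [Finite S]
    (D : Section4Data S) (γ : ℕ → Option S × Bool)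
    (hgeo : IsGeodesicRay D.R' γ)
    (hsub : Sublinear fun t => (intersectionFn D.R' γ t : ℝ)) :
    ∃ j : ℕ, ∀ t : ℕ, 1 ≤ t →
      (intersectionFn D.R' γ t : ℝ) ≤ Real.logb D.N t + 2 + 2 * j := by
  have hN28 := D.hN
  have hN1 : (1 : ℝ) < D.N := by exact_mod_cast (by omega : 1 < D.N)
  set A : ℕ → Set ℕ := fun t =>
    {n | ∃ w : Word (Option S), (∃ r ∈ cyclicClosure D.R', r.length ≤ t ∧ w <:+: r) ∧
      (∃ m, w <:+: rayPrefix γ m) ∧ w.length = n} with hA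
  have hiA : ∀ t, intersectionFn D.R' γ t = sSup (A t) := fun t => rfl
  have hbdd : ∀ t, BddAbove (A t) := by
    intro t
    refine ⟨t, ?_⟩
    rintro n ⟨w, ⟨r, _, hrt, hwr⟩, _, rfl⟩
    exact le_trans hwr.length_le hrt
  have hlow : ∀ t (w : Word (Option S)),
      (∃ r ∈ cyclicClosure D.R', r.length ≤ t ∧ w <:+: r) →
      (∃ m, w <:+: rayPrefix γ m) → w.length ≤ intersectionFn D.R' γ t := by
    intro t w h1 h2
    rw [hiA]
    exact le_csSup (hbdd t) ⟨w, h1, h2, rfl⟩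
  obtain ⟨T0, hT0⟩ := Metric.tendsto_atTop.mp hsub (1 / (2 * D.N)) (by positivity)
  set M := T0 + 1 with hMdef
  have hM1 : 1 ≤ M := by omega
  set T := D.lenr M + M with hTdef
  have hTpos : 0 < T := by have := D.lenr_pos M; omega
  have hT2 : T ≤ 2 * D.lenr M := by have := D.self_le_lenr M; omega
  have hρT : intersectionFn D.R' γ T < D.blk M := by
    have h1 := hT0 T (by omega)
    rw [Real.dist_eq, sub_zero, abs_of_nonneg (by positivity)] at h1
    have hTR : (0 : ℝ) < T := by exact_mod_cast hTpos
    have h2 : (intersectionFn D.R' γ T : ℝ) < 1 / (2 * D.N) * T := (div_lt_iff₀ hTR).1 h1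
    have h3 : (T : ℝ) ≤ 2 * (D.N * D.blk M) := by
      have : (T : ℝ) ≤ 2 * (D.lenr M : ℝ) := by exact_mod_cast hT2
      have hl : (D.lenr M : ℝ) = (D.N : ℝ) * (D.blk M : ℝ) := by
        rw [Section4Data.lenr]; push_cast; ring
      linarith
    have hNR : (0 : ℝ) < (D.N : ℝ) := by linarith
    have h4 : 1 / (2 * (D.N:ℝ)) * T ≤ (D.blk M : ℝ) := by
      rw [div_mul_eq_mul_div, one_mul, div_le_iff₀ (by positivity)]
      calc (T:ℝ) ≤ 2 * ((D.N:ℝ) * D.blk M) := h3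
        _ = (D.blk M : ℝ) * (2 * D.N) := by ring
    have := lt_of_lt_of_le h2 h4
    exact_mod_cast this
  -- main block estimate
  have hblock : ∀ q : Word (Option S), (∃ m, q <:+: rayPrefix γ m) →
      ∀ k, 1 ≤ k → ∀ i : ZMod 3,
      (q <:+: liftWord (D.r k i) ++ liftWord (D.r k i) ∨
       q <:+: wInv (liftWord (D.r k i)) ++ wInv (liftWord (D.r k i))) →
      q.length ≤ D.lenr M := by
    intro q hqγ k hk i hq
    by_cases hkM : k < M
    · have hlen : q.length ≤ 2 * D.lenr k := by
        have hl : (liftWord (D.r k i)).length = D.lenr k := by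
          rw [liftWord_length, D.r_length k hk i]
        rcases hq with h | h
        · have := h.length_le
          rw [List.length_append, hl] at this
          omega
        · have := h.length_le
          rw [List.length_append, wInv_length, hl] at this
          omega
      exact le_trans hlen (D.two_lenr_le k M hk hkM)
    · push_neg at hkM
      by_contra hbig
      push_neg at hbig
      obtain ⟨bs, hbs, hre⟩ := D.r_blocks M hM1 k hkM i
      have hblk2 : 2 * D.blk M ≤ q.length := by
        have h5 : 2 * D.blk M ≤ D.lenr M := by
          calc 2 * D.blk M ≤ D.N * D.blk M := Nat.mul_le_mul_right _ (by omega)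
            _ = D.lenr M := rfl
        omega
      have hfound : ∃ b : Word (Option S),
          b.length = D.blk M ∧ b <:+: q ∧
          ∃ r' ∈ cyclicClosure D.R', r'.length ≤ T ∧ b <:+: r' := by
        rcases hq with h | h
        · have hflat : liftWord (D.r k i) ++ liftWord (D.r k i)
              = ((bs.map liftWord) ++ (bs.map liftWord)).flatten := by
            rw [hre, liftWord_flatten, List.flatten_append]
          rw [hflat] at h
          have hall : ∀ b ∈ (bs.map liftWord) ++ (bs.map liftWord),
              b.length = D.blk M := by
            intro b hb
            have hb'' : b ∈ bs.map liftWord := by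
              rcases List.mem_append.1 hb with h' | h' <;> exact h'
            obtain ⟨b0, hb0, rfl⟩ := List.mem_map.1 hb''
            obtain ⟨α, β, rfl⟩ := hbs b0 hb0
            rw [liftWord_length, D.y_length M hM1]
          obtain ⟨b, hb, hbq⟩ := exists_block_infix (D.blk_pos M) _ q hall h hblk2
          have hb'' : b ∈ bs.map liftWord := by
            rcases List.mem_append.1 hb with h' | h' <;> exact h'
          obtain ⟨b0, hb0, rfl⟩ := List.mem_map.1 hb''
          obtain ⟨α, β, rfl⟩ := hbs b0 hb0
          refine ⟨_, ?_, hbq, D.rt M α, D.rt_mem_cc M hM1 α, ?_, ?_⟩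
          · rw [liftWord_length, D.y_length M hM1]
          · exact D.rt_length_le M hM1 α
          · exact (IsInfix.liftWord_mono (D.y_infix_r M α β)).trans
              (D.liftWord_r_prefix M α).isInfix
        · have hflat : wInv (liftWord (D.r k i)) ++ wInv (liftWord (D.r k i))
              = (((bs.map liftWord).map wInv).reverse
                  ++ ((bs.map liftWord).map wInv).reverse).flatten := by
            rw [hre, liftWord_flatten, wInv_flatten, List.flatten_append]
          rw [hflat] at h
          have hall : ∀ b ∈ ((bs.map liftWord).map wInv).reverse
              ++ ((bs.map liftWord).map wInv).reverse, b.length = D.blk M := by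
            intro b hb
            have hb'' : b ∈ ((bs.map liftWord).map wInv).reverse := by
              rcases List.mem_append.1 hb with h' | h' <;> exact h'
            rw [List.mem_reverse] at hb''
            obtain ⟨b1, hb1, rfl⟩ := List.mem_map.1 hb''
            obtain ⟨b0, hb0, rfl⟩ := List.mem_map.1 hb1
            obtain ⟨α, β, rfl⟩ := hbs b0 hb0
            rw [wInv_length, liftWord_length, D.y_length M hM1]
          obtain ⟨b, hb, hbq⟩ := exists_block_infix (D.blk_pos M) _ q hall h hblk2
          have hb'' : b ∈ ((bs.map liftWord).map wInv).reverse := by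
            rcases List.mem_append.1 hb with h' | h' <;> exact h'
          rw [List.mem_reverse] at hb''
          obtain ⟨b1, hb1, rfl⟩ := List.mem_map.1 hb''
          obtain ⟨b0, hb0, rfl⟩ := List.mem_map.1 hb1
          obtain ⟨α, β, rfl⟩ := hbs b0 hb0
          refine ⟨_, ?_, hbq, wInv (D.rt M α), D.wInv_rt_mem_cc M hM1 α, ?_, ?_⟩
          · rw [wInv_length, liftWord_length, D.y_length M hM1]
          · rw [wInv_length]; exact D.rt_length_le M hM1 α
          · exact IsInfix.wInv_mono ((IsInfix.liftWord_mono (D.y_infix_r M α β)).trans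
              (D.liftWord_r_prefix M α).isInfix)
      obtain ⟨b, hbl, hbq, hrest⟩ := hfound
      obtain ⟨m0, hm0⟩ := hqγ
      have hle := hlow T b hrest ⟨m0, hbq.trans hm0⟩
      rw [hbl] at hle
      omega
  -- conclusion
  refine ⟨D.lenr M, ?_⟩
  intro t ht
  have hlog0 : 0 ≤ Real.logb D.N t := Real.logb_nonneg hN1 (by exact_mod_cast ht)
  rw [hiA]
  rcases (A t).eq_empty_or_nonempty with he | hne
  · rw [he, csSup_empty]
    have h0 : (0 : ℝ) ≤ 2 + 2 * (D.lenr M : ℝ) := by positivity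
    simp only [Nat.bot_eq_zero, Nat.cast_zero]
    linarith
  · have hmem := Nat.sSup_mem hne (hbdd t)
    obtain ⟨w, ⟨r, hrcc, hrt, hwr⟩, hwγ, hlen⟩ := hmem
    rw [← hlen]
    obtain ⟨r0, hr0, n0, hrot⟩ := hrcc
    obtain ⟨k, hk1, i, rfl⟩ := hr0
    have hrt' : (D.rt k i).length ≤ t := by
      rcases hrot with h | h <;> rw [h] at hrt <;>
        simpa [List.length_rotate, wInv_length] using hrt
    have hkt : D.N ^ k ≤ t :=
      le_trans (D.pow_le_lenr k hk1) (le_trans (D.rt_length_ge k hk1 i) hrt')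
    have hklog : (k : ℝ) ≤ Real.logb D.N t := by
      have hcast : ((D.N : ℝ)) ^ k ≤ (t : ℝ) := by exact_mod_cast hkt
      have hpos : (0 : ℝ) < (D.N : ℝ) ^ k := by positivity
      calc (k : ℝ) = Real.logb D.N ((D.N : ℝ) ^ k) := by
            rw [Real.logb_pow, Real.logb_self_eq_one hN1]; ring
        _ ≤ Real.logb D.N t :=
            (Real.logb_le_logb hN1 hpos (lt_of_lt_of_le hpos hcast)).2 hcast
    have hWsub : ∀ q : Word (Option S), q <:+: w → ∃ m, q <:+: rayPrefix γ m := by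
      intro q hq
      obtain ⟨m, hm⟩ := hwγ
      exact ⟨m, hq.trans hm⟩
    by_cases htail : i = (3 : ZMod 3) ∧ (k : ℝ) ≤ (D.r k i).length / 42
    · have hrteq : D.rt k i = liftWord (D.r k i) ++ aPow S k := by
        rw [Section4Data.rt, if_pos htail]
      have hwlen : w.length ≤ 2 * D.lenr M + k := by
        rcases hrot with h | h
        · rw [h, hrteq] at hwr
          obtain ⟨w1, w2, w3, w4, heq, h1, h3, h24⟩ :=
            rotate_append_split (liftWord (D.r k i)) (aPow S k) n0 hwr
          have hw1 : w1.length ≤ D.lenr M := by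
            apply hblock w1 (hWsub w1 ⟨[], w2 ++ (w3 ++ w4), by rw [heq]; simp⟩) k hk1 i
            exact Or.inl (h1.trans ⟨[], liftWord (D.r k i), by simp⟩)
          have hw3 : w3.length ≤ D.lenr M := by
            apply hblock w3 (hWsub w3 ⟨w1 ++ w2, w4, by rw [heq]; simp [List.append_assoc]⟩)
              k hk1 i
            exact Or.inl (h3.trans ⟨[], liftWord (D.r k i), by simp⟩)
          have := congrArg List.length heq
          simp only [List.length_append] at this
          rw [aPow_length] at h24
          omega
        · rw [h, hrteq, wInv_append, append_rotate_swap] at hwr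
          obtain ⟨w1, w2, w3, w4, heq, h1, h3, h24⟩ :=
            rotate_append_split (wInv (liftWord (D.r k i))) (wInv (aPow S k)) _ hwr
          have hw1 : w1.length ≤ D.lenr M := by
            apply hblock w1 (hWsub w1 ⟨[], w2 ++ (w3 ++ w4), by rw [heq]; simp⟩) k hk1 i
            exact Or.inr (h1.trans ⟨[], wInv (liftWord (D.r k i)), by simp⟩)
          have hw3 : w3.length ≤ D.lenr M := by
            apply hblock w3 (hWsub w3 ⟨w1 ++ w2, w4, by rw [heq]; simp [List.append_assoc]⟩)
              k hk1 i
            exact Or.inr (h3.trans ⟨[], wInv (liftWord (D.r k i)), by simp⟩)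
          have := congrArg List.length heq
          simp only [List.length_append] at this
          rw [wInv_length, aPow_length] at h24
          omega
      calc (w.length : ℝ) ≤ 2 * (D.lenr M : ℝ) + k := by exact_mod_cast hwlen
        _ ≤ Real.logb D.N t + 2 + 2 * (D.lenr M : ℝ) := by linarith
    · have hrteq : D.rt k i = liftWord (D.r k i) := by
        rw [Section4Data.rt, if_neg htail]
      have hwlen : w.length ≤ D.lenr M := by
        apply hblock w hwγ k hk1 i
        rcases hrot with h | h
        · rw [h, hrteq] at hwr
          exact Or.inl (hwr.trans (rotate_infix_sq _ _))
        · rw [h, hrteq] at hwr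
          exact Or.inr (hwr.trans (rotate_infix_sq _ _))
      calc (w.length : ℝ) ≤ (D.lenr M : ℝ) := by exact_mod_cast hwlen
        _ ≤ Real.logb D.N t + 2 + 2 * (D.lenr M : ℝ) := by
            have : (0:ℝ) ≤ (D.lenr M : ℝ) := by positivity
            linarith
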